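/- Let Σ be a real symmetric positive definite matrix of size (m+n)×(m+n), Q = Σ⁻¹, σ² ≥ 0 a real scalar, A = I + σ²Q, and B = A⁻¹, with Σ, Q, A, B all partitioned conformally into blocks indexed 11, 12, 21, 22 where the 11 blocks are m×m. Then det(Σ + σ²I) = det(Σ) · det(A₂₂) / det(B₁₁). (Paper's Proposition 3(a).) -/

import Mathlib

open Matrix

lemma posDef_toBlocks₂₂ {m n : ℕ} {M : Matrix (Fin m ⊕ Fin n) (Fin m ⊕ Fin n) ℝ}
    (hM : M.PosDef) : M.toBlocks₂₂.PosDef := by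
  rw [Matrix.posDef_iff_dotProduct_mulVec]
  constructor
  · ext i j
    have := congrFun (congrFun hM.isHermitian (Sum.inr i)) (Sum.inr j)
    simpa [Matrix.toBlocks₂₂, Matrix.conjTranspose_apply] using this
  · intro x hx
    have hy : (Sum.elim (0 : Fin m → ℝ) x) ≠ 0 := by
      intro h
      apply hx
      funext i
      exact congrFun h (Sum.inr i)
    have key := (Matrix.posDef_iff_dotProduct_mulVec.mp hM).2 hy
    have hMb : M = Matrix.fromBlocks M.toBlocks₁₁ M.toBlocks₁₂ M.toBlocks₂₁ M.toBlocks₂₂ :=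
      (Matrix.fromBlocks_toBlocks M).symm
    rw [hMb, Matrix.fromBlocks_mulVec] at key
    simpa [sumElim_dotProduct_sumElim, Matrix.mulVec_zero] using key

theorem det_add_smul_one_eq_det_mul_det_div_det
    (m n : ℕ) (S : Matrix (Fin m ⊕ Fin n) (Fin m ⊕ Fin n) ℝ)
    (hsym : S.IsSymm) (hpd : S.PosDef) (σsq : ℝ) (hσ : 0 ≤ σsq)
    (A B : Matrix (Fin m ⊕ Fin n) (Fin m ⊕ Fin n) ℝ)
    (hA : A = 1 + σsq • S⁻¹) (hB : B = A⁻¹) :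
    (S + σsq • (1 : Matrix (Fin m ⊕ Fin n) (Fin m ⊕ Fin n) ℝ)).det =
      S.det * (A.toBlocks₂₂).det / (B.toBlocks₁₁).det := by
  have hSinv : (S⁻¹).PosDef := hpd.inv
  have hsm : (σsq • S⁻¹).PosSemidef := by
    refine Matrix.posSemidef_iff_dotProduct_mulVec.mpr ⟨?_, fun x => ?_⟩
    · show (σsq • S⁻¹)ᴴ = _
      rw [Matrix.conjTranspose_smul, hSinv.isHermitian.eq]
      simp
    · rw [Matrix.smul_mulVec, dotProduct_smul, smul_eq_mul]
      exact mul_nonneg hσ ((Matrix.posSemidef_iff_dotProduct_mulVec.mp hSinv.posSemidef).2 x)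
  have hApd : A.PosDef := by
    rw [hA]; exact Matrix.PosDef.add_posSemidef Matrix.PosDef.one hsm
  haveI : Invertible A := A.invertibleOfIsUnitDet hApd.det_pos.ne'.isUnit
  have hA22pd : (A.toBlocks₂₂).PosDef := posDef_toBlocks₂₂ hApd
  haveI : Invertible A.toBlocks₂₂ :=
    (A.toBlocks₂₂).invertibleOfIsUnitDet hA22pd.det_pos.ne'.isUnit
  -- Step 1: S + σsq • 1 = S * A
  have hSA : S + σsq • (1 : Matrix (Fin m ⊕ Fin n) (Fin m ⊕ Fin n) ℝ) = S * A := by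
    rw [hA, Matrix.mul_add, Matrix.mul_one, Matrix.mul_smul,
      Matrix.mul_nonsing_inv S hpd.det_pos.ne'.isUnit]
  have hAb : A = Matrix.fromBlocks A.toBlocks₁₁ A.toBlocks₁₂ A.toBlocks₂₁ A.toBlocks₂₂ :=
    (Matrix.fromBlocks_toBlocks A).symm
  haveI instFB :
      Invertible (Matrix.fromBlocks A.toBlocks₁₁ A.toBlocks₁₂ A.toBlocks₂₁ A.toBlocks₂₂) :=
    (‹Invertible A›).copy _ hAb.symm
  haveI instSchur :
      Invertible (A.toBlocks₁₁ - A.toBlocks₁₂ * ⅟(A.toBlocks₂₂) * A.toBlocks₂₁) :=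
    Matrix.invertibleOfFromBlocks₂₂Invertible _ _ _ _
  set C := A.toBlocks₁₁ - A.toBlocks₁₂ * ⅟(A.toBlocks₂₂) * A.toBlocks₂₁ with hC
  have hdetA : A.det = (A.toBlocks₂₂).det * C.det := by
    conv_lhs => rw [hAb]
    rw [Matrix.det_fromBlocks₂₂]
  have hBF : B = ⅟(Matrix.fromBlocks A.toBlocks₁₁ A.toBlocks₁₂ A.toBlocks₂₁ A.toBlocks₂₂) := by
    rw [hB, invOf_eq_nonsing_inv, ← hAb]
  rw [Matrix.invOf_fromBlocks₂₂_eq] at hBF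
  have hB11 : B.toBlocks₁₁ = ⅟C := by
    rw [hBF, Matrix.toBlocks_fromBlocks₁₁]
  have hCdet : C.det ≠ 0 :=
    ((Matrix.isUnit_iff_isUnit_det C).mp (isUnit_of_invertible C)).ne_zero
  have hdetB11 : (B.toBlocks₁₁).det = (C.det)⁻¹ := by
    rw [hB11, invOf_eq_nonsing_inv, Matrix.det_nonsing_inv, Ring.inverse_eq_inv']
  rw [hSA, Matrix.det_mul, hdetA, hdetB11]
  field_simp
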